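/- arXiv:1104.1915 — 3 statements merged into one kernel-verified Lean document; each statement's English description precedes it below -/
import Mathlib

section
/- Let J be a bounded self-adjoint Jacobi matrix on ℓ²(ℕ) and suppose σ_ess(J) ∩ (a,b) = ∅ for some a < b, and that J has no eigenvalues in (a,b). Then for every n, both the upper-left n×n corner P_n J P_n (acting on ran P_n) and the n-times stripped matrix (1−P_n)J(1−P_n) (acting on ran(1−P_n)) have at most one eigenvalue in the interval (a,b). -/
open MeasureTheory Filter Set Submodule
open scoped RealInnerProductSpace

lemma span_inner {H : Type*} [NormedAddCommGroup H] [InnerProductSpace ℝ H]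
    {s : Set H} {t : H} (h : ∀ x ∈ s, ⟪x, t⟫ = 0) :
    ∀ w ∈ span ℝ s, ⟪w, t⟫ = 0 := by
  intro w hw
  induction hw using Submodule.span_induction with
  | mem x hx => exact h x hx
  | zero => exact inner_zero_left t
  | add x y hx hy ihx ihy => rw [inner_add_left, ihx, ihy]; ring
  | smul r x hx ih => rw [real_inner_smul_left, ih]; ring

lemma main_sub {H : Type*} [NormedAddCommGroup H] [InnerProductSpace ℝ H] [CompleteSpace H]
    (J : H →L[ℝ] H) (hsa : IsSelfAdjoint J) (α β : ℝ) (hab : α < β)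
    (heig : ∀ μ ∈ Set.Ioo α β, ¬ ∃ v : H, v ≠ 0 ∧ J v = μ • v)
    (hgap : ∀ v : H, ((β-α)/2)^2 * ‖v‖^2 ≤ ‖J v - ((α+β)/2) • v‖^2)
    (K : Submodule ℝ H) (g : H) (hgK : ∀ w ∈ K, ⟪w, g⟫ = 0)
    (hstr : ∀ v ∈ K, J v - ⟪g, J v⟫ • g ∈ K) :
    Set.Subsingleton {μ ∈ Set.Ioo α β | ∃ v ∈ K, v ≠ 0 ∧ ∀ w ∈ K, ⟪w, J v⟫ = μ * ⟪w, v⟫} := by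
  set c : ℝ := (α+β)/2 with hc
  set d : ℝ := (β-α)/2 with hd
  have hd0 : 0 < d := by simp [hd]; linarith
  -- eigenvectors of the compression satisfy J v = μ v + ⟪g,Jv⟫ g
  have eigenform : ∀ μ, ∀ v ∈ K, (∀ w ∈ K, ⟪w, J v⟫ = μ * ⟪w, v⟫) →
      J v = μ • v + ⟪g, J v⟫ • g := by
    intro μ v hv hev
    set w : H := J v - ⟪g, J v⟫ • g - μ • v with hw
    have hwK : w ∈ K := K.sub_mem (hstr v hv) (K.smul_mem μ hv)
    have hwg : ⟪w, g⟫ = 0 := hgK w hwK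
    have hw0 : w = 0 := by
      rw [← inner_self_eq_zero (𝕜 := ℝ)]
      have : ⟪w, w⟫ = ⟪w, J v⟫ - ⟪g, J v⟫ * ⟪w, g⟫ - μ * ⟪w, v⟫ := by
        rw [hw]
        rw [inner_sub_right, inner_sub_right, real_inner_smul_right, real_inner_smul_right]
      rw [this, hev w hwK, hwg]; ring
    have h := hw0
    rw [hw, sub_sub, sub_eq_zero] at h
    exact h.trans (add_comm _ _)
  -- eigenvectors with zero coupling would be true eigenvectors
  have coupling_ne : ∀ μ ∈ Set.Ioo α β, ∀ v ∈ K, v ≠ 0 →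
      (∀ w ∈ K, ⟪w, J v⟫ = μ * ⟪w, v⟫) → ⟪g, J v⟫ ≠ 0 := by
    intro μ hμ v hv hv0 hev hzero
    refine heig μ hμ ⟨v, hv0, ?_⟩
    have := eigenform μ v hv hev
    rw [hzero, zero_smul, add_zero] at this
    exact this
  intro μ₁ hμ₁ μ₂ hμ₂
  by_contra hne
  obtain ⟨hμ₁I, v₁, hv₁K, hv₁0, hev₁⟩ := hμ₁
  obtain ⟨hμ₂I, v₂, hv₂K, hv₂0, hev₂⟩ := hμ₂
  have hc₁ : ⟪g, J v₁⟫ ≠ 0 := coupling_ne μ₁ hμ₁I v₁ hv₁K hv₁0 hev₁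
  have hc₂ : ⟪g, J v₂⟫ ≠ 0 := coupling_ne μ₂ hμ₂I v₂ hv₂K hv₂0 hev₂
  set c₁ : ℝ := ⟪g, J v₁⟫
  set c₂ : ℝ := ⟪g, J v₂⟫
  -- orthogonality of the two eigenvectors
  have horth : ⟪v₁, v₂⟫ = 0 := by
    have h1 : ⟪v₂, J v₁⟫ = μ₁ * ⟪v₂, v₁⟫ := hev₁ v₂ hv₂K
    have h2 : ⟪v₁, J v₂⟫ = μ₂ * ⟪v₁, v₂⟫ := hev₂ v₁ hv₁K
    have hsym : ⟪v₁, J v₂⟫ = ⟪v₂, J v₁⟫ := by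
      have h := hsa.isSymmetric v₂ v₁
      rw [real_inner_comm (J v₂) v₁]
      exact h
    have hcomm : ⟪v₂, v₁⟫ = ⟪v₁, v₂⟫ := real_inner_comm _ _
    rw [h1, h2, hcomm] at hsym
    have h0 : (μ₂ - μ₁) * ⟪v₁, v₂⟫ = 0 := by linarith
    rcases mul_eq_zero.1 h0 with h | h
    · exact absurd (by linarith : μ₁ = μ₂) hne
    · exact h
  have hJ1 : J v₁ = μ₁ • v₁ + c₁ • g := eigenform μ₁ v₁ hv₁K hev₁
  have hJ2 : J v₂ = μ₂ • v₂ + c₂ • g := eigenform μ₂ v₂ hv₂K hev₂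
  set v : H := c₂ • v₁ - c₁ • v₂ with hvdef
  have hnorm : ∀ p q : ℝ, ‖p • v₁ - q • v₂‖^2 = p^2*‖v₁‖^2 + q^2*‖v₂‖^2 := by
    intro p q
    rw [norm_sub_sq_real, real_inner_smul_left, real_inner_smul_right, horth,
      norm_smul, norm_smul, mul_pow, mul_pow]
    simp [sq_abs]
  have hJv : J v - c • v = (c₂*(μ₁-c)) • v₁ - (c₁*(μ₂-c)) • v₂ := by
    have hlin : J v = c₂ • J v₁ - c₁ • J v₂ := by
      rw [hvdef, map_sub, ContinuousLinearMap.map_smul, ContinuousLinearMap.map_smul]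
    rw [hlin, hJ1, hJ2, hvdef]
    module
  have hgapv := hgap v
  rw [hJv] at hgapv
  rw [hnorm] at hgapv
  rw [hnorm] at hgapv
  have hb1 : (μ₁ - c)^2 < d^2 := by
    obtain ⟨l1, l2⟩ := hμ₁I; rw [hc, hd]; nlinarith
  have hb2 : (μ₂ - c)^2 < d^2 := by
    obtain ⟨l1, l2⟩ := hμ₂I; rw [hc, hd]; nlinarith
  have hp1 : 0 < c₂^2 * ‖v₁‖^2 := by
    apply mul_pos (by positivity)
    have := norm_pos_iff.2 hv₁0; positivity
  have hp2 : 0 < c₁^2 * ‖v₂‖^2 := by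
    apply mul_pos (by positivity)
    have := norm_pos_iff.2 hv₂0; positivity
  have k1 : (μ₁-c)^2 * (c₂^2*‖v₁‖^2) < d^2 * (c₂^2*‖v₁‖^2) :=
    mul_lt_mul_of_pos_right hb1 hp1
  have k2 : (μ₂-c)^2 * (c₁^2*‖v₂‖^2) < d^2 * (c₁^2*‖v₂‖^2) :=
    mul_lt_mul_of_pos_right hb2 hp2
  nlinarith [k1, k2, hgapv]

lemma gapA {H : Type*} [NormedAddCommGroup H] [InnerProductSpace ℝ H] [CompleteSpace H]
    (e : ℕ → H) (hON : Orthonormal ℝ e)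
    (htot : (span ℝ (Set.range e)).topologicalClosure = ⊤)
    (J : H →L[ℝ] H) (hsa : IsSelfAdjoint J) (μ : ℝ)
    (hessμ : ¬ ∃ u : ℕ → H, (∀ n, ‖u n‖ = 1) ∧
      (∀ v : H, Tendsto (fun n => ⟪u n, v⟫) atTop (nhds 0)) ∧
      Tendsto (fun n => ‖J (u n) - μ • u n‖) atTop (nhds 0))
    (heigμ : ¬ ∃ v : H, v ≠ 0 ∧ J v = μ • v) :
    ∃ ε > 0, ∀ v : H, ε * ‖v‖ ≤ ‖J v - μ • v‖ := by
  by_contra hcon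
  push_neg at hcon
  -- produce a normalized approximate eigenvector sequence
  have hu : ∃ u : ℕ → H, (∀ m, ‖u m‖ = 1) ∧
      ∀ m : ℕ, ‖J (u m) - μ • u m‖ < 1/(m+1) := by
    have h' : ∀ m : ℕ, ∃ v : H, ‖J v - μ • v‖ < (1/(m+1)) * ‖v‖ := by
      intro m
      obtain ⟨v, hv⟩ := hcon (1/(m+1)) (by positivity)
      exact ⟨v, hv⟩
    choose v hv using h'
    have hv0 : ∀ m, v m ≠ 0 := by
      intro m h0
      have := hv m
      rw [h0] at this
      simp at this
    refine ⟨fun m => (‖v m‖)⁻¹ • v m, fun m => norm_smul_inv_norm (hv0 m), fun m => ?_⟩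
    have hne : (0:ℝ) < ‖v m‖ := norm_pos_iff.2 (hv0 m)
    have heq : J ((‖v m‖)⁻¹ • v m) - μ • ((‖v m‖)⁻¹ • v m)
        = (‖v m‖)⁻¹ • (J (v m) - μ • v m) := by
      rw [ContinuousLinearMap.map_smul, smul_sub, smul_comm]
    rw [heq, norm_smul]
    have habs : |(‖v m‖)⁻¹| = (‖v m‖)⁻¹ := abs_of_nonneg (by positivity)
    rw [Real.norm_eq_abs, habs]
    calc (‖v m‖)⁻¹ * ‖J (v m) - μ • v m‖ < (‖v m‖)⁻¹ * ((1/(m+1)) * ‖v m‖) := by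
          exact mul_lt_mul_of_pos_left (hv m) (by positivity)
      _ = 1/(m+1) := by field_simp
  obtain ⟨u, hu1, hu2⟩ := hu
  have hutend : Tendsto (fun m => ‖J (u m) - μ • u m‖) atTop (nhds 0) :=
    squeeze_zero (fun m => norm_nonneg _) (fun m => (hu2 m).le)
      tendsto_one_div_add_atTop_nhds_zero_nat
  -- extract a coordinatewise convergent subsequence
  set B : HilbertBasis ℕ ℝ H := HilbertBasis.mk hON htot.ge with hB
  have hBe := HilbertBasis.coe_mk hON htot.ge
  have hcpt : IsCompact (Set.pi Set.univ fun _ : ℕ => Set.Icc (-1:ℝ) 1) :=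
    isCompact_univ_pi fun _ => isCompact_Icc
  have hmem : ∀ m, (fun k => ⟪e k, u m⟫) ∈ (Set.pi Set.univ fun _ : ℕ => Set.Icc (-1:ℝ) 1) := by
    intro m k _
    have h1 := abs_real_inner_le_norm (e k) (u m)
    rw [hON.1 k, hu1 m, one_mul] at h1
    exact abs_le.1 h1
  obtain ⟨f, hfC, φ, hφ, hconv⟩ := hcpt.isSeqCompact hmem
  have hptw : ∀ k, Tendsto (fun m => ⟪e k, u (φ m)⟫) atTop (nhds (f k)) :=
    fun k => tendsto_pi_nhds.1 hconv k
  -- the limit coordinates are square-summable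
  have hsumle : ∀ s : Finset ℕ, ∑ k ∈ s, (f k)^2 ≤ 1 := by
    intro s
    have hbd : ∀ m, ∑ k ∈ s, ⟪e k, u (φ m)⟫^2 ≤ 1 := by
      intro m
      have := hON.sum_inner_products_le (u (φ m)) (s := s)
      rw [hu1 (φ m)] at this
      simpa [Real.norm_eq_abs, sq_abs] using this
    have hlim : Tendsto (fun m => ∑ k ∈ s, ⟪e k, u (φ m)⟫^2) atTop
        (nhds (∑ k ∈ s, (f k)^2)) :=
      tendsto_finset_sum s (fun k _ => (hptw k).pow 2)
    exact le_of_tendsto' hlim hbd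
  have hf2 : Memℓp f 2 := by
    apply memℓp_gen
    have : (fun k => ‖f k‖ ^ (2:ENNReal).toReal) = fun k => (f k)^2 := by
      funext k
      rw [show ((2:ENNReal).toReal) = (2:ℝ) by simp]
      rw [Real.rpow_two, Real.norm_eq_abs, sq_abs]
    rw [this]
    exact summable_of_sum_le (fun k => sq_nonneg _) hsumle
  obtain ⟨winf, hwinf⟩ : ∃ x : H, x = B.repr.symm ⟨f, hf2⟩ := ⟨_, rfl⟩
  have hcoord : ∀ k, ⟪e k, winf⟫ = f k := by
    intro k
    have h1 := B.repr_apply_apply winf k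
    rw [hB] at h1
    rw [hBe] at h1
    rw [← hB] at h1
    rw [← h1, hwinf, LinearIsometryEquiv.apply_symm_apply]
  -- uniform bound
  have hM : ∀ m, ‖u (φ m) - winf‖ ≤ 1 + ‖winf‖ := by
    intro m
    calc ‖u (φ m) - winf‖ ≤ ‖u (φ m)‖ + ‖winf‖ := norm_sub_le _ _
      _ = 1 + ‖winf‖ := by rw [hu1]
  set M : ℝ := 1 + ‖winf‖ with hMdef
  have hM0 : 0 < M := by positivity
  -- the set of vectors along which we have weak convergence is a submodule
  let W : Submodule ℝ H :=
    { carrier := {w : H | Tendsto (fun m => ⟪w, u (φ m) - winf⟫) atTop (nhds 0)}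
      add_mem' := by
        intro x y hx hy
        have h := Filter.Tendsto.add hx hy
        rw [add_zero] at h
        simpa [inner_add_left] using h
      zero_mem' := by
        simpa [inner_zero_left] using
          (tendsto_const_nhds : Tendsto (fun _ : ℕ => (0:ℝ)) atTop (nhds 0))
      smul_mem' := by
        intro r x hx
        have h := hx.const_mul r
        rw [mul_zero] at h
        simpa [real_inner_smul_left, mul_comm] using h }
  have hWe : ∀ k, e k ∈ W := by
    intro k
    have h := (hptw k).sub (tendsto_const_nhds (x := f k))
    rw [sub_self] at h
    show Tendsto _ _ _
    simpa [inner_sub_right, hcoord k] using h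
  have hWspan : span ℝ (Set.range e) ≤ W :=
    span_le.2 (by rintro x ⟨k, rfl⟩; exact hWe k)
  -- weak convergence along every vector, by density
  have key : ∀ w : H, Tendsto (fun m => ⟪w, u (φ m) - winf⟫) atTop (nhds 0) := by
    intro w
    have hwcl : w ∈ closure (span ℝ (Set.range e) : Set H) := by
      have hmem : w ∈ (span ℝ (Set.range e)).topologicalClosure := by rw [htot]; trivial
      exact hmem
    rw [Metric.tendsto_atTop]
    intro ε hε
    obtain ⟨w', hw'mem, hw'close⟩ := Metric.mem_closure_iff.1 hwcl (ε/(2*M)) (by positivity)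
    have ht : Tendsto (fun m => ⟪w', u (φ m) - winf⟫) atTop (nhds 0) := hWspan hw'mem
    rw [Metric.tendsto_atTop] at ht
    obtain ⟨N, hN⟩ := ht (ε/2) (by positivity)
    refine ⟨N, fun m hm => ?_⟩
    have h1 := hN m hm
    rw [Real.dist_0_eq_abs] at h1 ⊢
    have h2 : ⟪w, u (φ m) - winf⟫
        = ⟪w - w', u (φ m) - winf⟫ + ⟪w', u (φ m) - winf⟫ := by
      rw [← inner_add_left, sub_add_cancel]
    have h3 : |⟪w - w', u (φ m) - winf⟫| ≤ ‖w - w'‖ * M :=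
      calc |⟪w - w', u (φ m) - winf⟫| ≤ ‖w - w'‖ * ‖u (φ m) - winf‖ :=
            abs_real_inner_le_norm _ _
        _ ≤ ‖w - w'‖ * M := by
            exact mul_le_mul_of_nonneg_left (hM m) (norm_nonneg _)
    have hd : ‖w - w'‖ < ε/(2*M) := by rw [← dist_eq_norm]; exact hw'close
    have h5 : ‖w - w'‖ * M < ε/2 := by
      calc ‖w - w'‖ * M < (ε/(2*M)) * M := by exact mul_lt_mul_of_pos_right hd hM0
        _ = ε/2 := by field_simp
    calc |⟪w, u (φ m) - winf⟫|
        ≤ |⟪w - w', u (φ m) - winf⟫| + |⟪w', u (φ m) - winf⟫| := by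
          rw [h2]; exact abs_add_le _ _
      _ < ε/2 + ε/2 := by
          have := lt_of_le_of_lt h3 h5
          exact add_lt_add this h1
      _ = ε := by ring
  -- the weak limit is an eigenvector (or zero)
  have heigform : J winf = μ • winf := by
    have hz : ∀ w : H, ⟪w, J winf - μ • winf⟫ = 0 := by
      intro w
      have e1 : ∀ m : ℕ, ⟪J w - μ • w, u (φ m)⟫ = ⟪w, J (u (φ m)) - μ • u (φ m)⟫ := by
        intro m
        have hsym := hsa.isSymmetric w (u (φ m))
        simp only [ContinuousLinearMap.coe_coe] at hsym
        rw [inner_sub_left, inner_sub_right, real_inner_smul_left, real_inner_smul_right, hsym]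
      have t1 : Tendsto (fun m => ⟪J w - μ • w, u (φ m)⟫) atTop (nhds 0) := by
        have hb : ∀ m : ℕ, ‖⟪J w - μ • w, u (φ m)⟫‖ ≤ ‖w‖ * ‖J (u (φ m)) - μ • u (φ m)‖ := by
          intro m
          rw [e1 m, Real.norm_eq_abs]
          exact abs_real_inner_le_norm _ _
        have hg : Tendsto (fun m => ‖w‖ * ‖J (u (φ m)) - μ • u (φ m)‖) atTop (nhds 0) := by
          have := (hutend.comp hφ.tendsto_atTop).const_mul ‖w‖
          rw [mul_zero] at this
          exact this
        exact squeeze_zero_norm hb hg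
      have t2 := key (J w - μ • w)
      have t3 : Tendsto (fun m => ⟪J w - μ • w, u (φ m)⟫ - ⟪J w - μ • w, u (φ m) - winf⟫)
          atTop (nhds 0) := by
        have := t1.sub t2
        rw [sub_zero] at this
        exact this
      have t4 : (fun m => ⟪J w - μ • w, u (φ m)⟫ - ⟪J w - μ • w, u (φ m) - winf⟫)
          = fun _ : ℕ => ⟪J w - μ • w, winf⟫ := by
        funext m
        rw [inner_sub_right]
        ring
      rw [t4] at t3
      have hval : ⟪J w - μ • w, winf⟫ = 0 := tendsto_nhds_unique tendsto_const_nhds t3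
      have hsym := hsa.isSymmetric w winf
      simp only [ContinuousLinearMap.coe_coe] at hsym
      rw [inner_sub_right, real_inner_smul_right, ← hsym]
      rw [inner_sub_left, real_inner_smul_left] at hval
      linarith
    have h0 := hz (J winf - μ • winf)
    rw [inner_self_eq_zero] at h0
    exact sub_eq_zero.1 h0
  by_cases hw0 : winf = 0
  · refine hessμ ⟨fun m => u (φ m), fun m => hu1 _, ?_, hutend.comp hφ.tendsto_atTop⟩
    intro v
    have h := key v
    rw [hw0] at h
    simp only [sub_zero] at h
    have h2 : (fun m => ⟪u (φ m), v⟫) = fun m => ⟪v, u (φ m)⟫ :=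
      funext fun m => real_inner_comm _ _
    rw [h2]
    exact h
  · exact heigμ ⟨winf, hw0, heigform⟩

set_option maxHeartbeats 1000000 in
lemma gapB {H : Type*} [NormedAddCommGroup H] [InnerProductSpace ℝ H] [CompleteSpace H]
    (J : H →L[ℝ] H) (hsa : IsSelfAdjoint J) (α β : ℝ) (hab : α < β)
    (hA : ∀ μ ∈ Set.Ioo α β, ∃ ε > 0, ∀ v : H, ε * ‖v‖ ≤ ‖J v - μ • v‖) :
    ∀ v : H, ((β-α)/2)^2 * ‖v‖^2 ≤ ‖J v - ((α+β)/2) • v‖^2 := by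
  set c : ℝ := (α+β)/2 with hcdef
  set d : ℝ := (β-α)/2 with hddef
  have hd0 : 0 < d := by rw [hddef]; linarith
  by_contra hcon
  push_neg at hcon
  obtain ⟨v₀, hv₀⟩ := hcon
  have hv₀0 : v₀ ≠ 0 := by
    intro h0
    rw [h0] at hv₀
    simp at hv₀
  have hsym : ∀ x y : H, ⟪J x, y⟫ = ⟪x, J y⟫ := by
    intro x y
    have h := hsa.isSymmetric x y
    simpa using h
  have hscale : ∀ (v : H) (t : ℝ), J (t • v) - c • (t • v) = t • (J v - c • v) := by
    intro v t
    rw [ContinuousLinearMap.map_smul, smul_sub, smul_comm]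
  -- the set of quadratic-form values on unit vectors
  set s : Set ℝ := (fun v : H => ‖J v - c • v‖^2 - d^2) '' {v : H | ‖v‖ = 1} with hsdef
  have hbdd : BddBelow s := by
    refine ⟨-d^2, ?_⟩
    rintro r ⟨v, hv, rfl⟩
    have := sq_nonneg ‖J v - c • v‖
    dsimp only
    linarith
  have hnorm_u₀ : ‖(‖v₀‖⁻¹ : ℝ) • v₀‖ = 1 := norm_smul_inv_norm hv₀0
  have hne : s.Nonempty := ⟨_, ⟨_, hnorm_u₀, rfl⟩⟩
  set γ : ℝ := sInf s with hγdef
  have hnv₀ : 0 < ‖v₀‖ := norm_pos_iff.2 hv₀0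
  have hval_u₀ : ‖J ((‖v₀‖⁻¹:ℝ) • v₀) - c • ((‖v₀‖⁻¹:ℝ) • v₀)‖^2 - d^2 < 0 := by
    rw [hscale, norm_smul, Real.norm_eq_abs, abs_of_nonneg (by positivity : (0:ℝ) ≤ ‖v₀‖⁻¹)]
    have e2 : ‖J v₀ - c • v₀‖^2 * (‖v₀‖⁻¹)^2 < (d^2*‖v₀‖^2) * (‖v₀‖⁻¹)^2 :=
      mul_lt_mul_of_pos_right hv₀ (by positivity)
    have e3 : (d^2*‖v₀‖^2) * (‖v₀‖⁻¹)^2 = d^2*(‖v₀‖⁻¹*‖v₀‖)^2 := by ring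
    rw [inv_mul_cancel₀ hnv₀.ne', one_pow, mul_one] at e3
    nlinarith [e2, e3]
  have hγneg : γ < 0 :=
    lt_of_le_of_lt (csInf_le hbdd ⟨_, hnorm_u₀, rfl⟩) hval_u₀
  have hγd : -d^2 ≤ γ := by
    refine le_csInf hne ?_
    rintro r ⟨v, hv, rfl⟩
    have := sq_nonneg ‖J v - c • v‖
    dsimp only
    linarith
  have hγlb : ∀ v : H, γ * ‖v‖^2 ≤ ‖J v - c • v‖^2 - d^2*‖v‖^2 := by
    intro v
    rcases eq_or_ne v 0 with rfl | hv0
    · simp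
    · have hnv : 0 < ‖v‖ := norm_pos_iff.2 hv0
      have hunit : ‖(‖v‖⁻¹ : ℝ) • v‖ = 1 := norm_smul_inv_norm hv0
      have hlow : γ ≤ ‖J ((‖v‖⁻¹:ℝ) • v) - c • ((‖v‖⁻¹:ℝ) • v)‖^2 - d^2 :=
        csInf_le hbdd ⟨_, hunit, rfl⟩
      rw [hscale, norm_smul, Real.norm_eq_abs,
        abs_of_nonneg (by positivity : (0:ℝ) ≤ ‖v‖⁻¹)] at hlow
      have hinv : ‖v‖⁻¹ * ‖v‖ = 1 := inv_mul_cancel₀ hnv.ne'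
      have h2 := mul_le_mul_of_nonneg_right hlow (le_of_lt (by positivity : (0:ℝ) < ‖v‖^2))
      have e1 : ((‖v‖⁻¹ * ‖J v - c • v‖)^2 - d^2)*‖v‖^2
          = ‖J v - c • v‖^2*(‖v‖⁻¹*‖v‖)^2 - d^2*‖v‖^2 := by ring
      rw [hinv, one_pow, mul_one] at e1
      linarith [h2, e1]
  set δ : ℝ := Real.sqrt (d^2 + γ) with hδdef
  have hδ0 : 0 ≤ δ := Real.sqrt_nonneg _
  have hδsq : δ^2 = d^2 + γ := Real.sq_sqrt (by linarith)
  have hδd : δ < d := by nlinarith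
  -- both roots lie in the gap
  have hmemp : c + δ ∈ Set.Ioo α β := by
    constructor
    · rw [hcdef]; rw [hddef] at *; linarith
    · rw [hcdef]; rw [hddef] at *; linarith
  have hmemm : c - δ ∈ Set.Ioo α β := by
    constructor
    · rw [hcdef]; rw [hddef] at *; linarith
    · rw [hcdef]; rw [hddef] at *; linarith
  obtain ⟨εp, hεp0, hεp⟩ := hA (c + δ) hmemp
  obtain ⟨εm, hεm0, hεm⟩ := hA (c - δ) hmemm
  -- the operator (J - λ₊)(J - λ₋)
  set T : H → H := fun x => J (J x) - (2*c) • J x + (c^2-δ^2) • x with hT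
  have hTfact : ∀ x : H, T x = J (J x - (c-δ) • x) - (c+δ) • (J x - (c-δ) • x) := by
    intro x
    rw [hT]
    simp only [map_sub, ContinuousLinearMap.map_smul]
    module
  have hTlow : ∀ x : H, (εp*εm) * ‖x‖ ≤ ‖T x‖ := by
    intro x
    have h1 : εm * ‖x‖ ≤ ‖J x - (c-δ) • x‖ := hεm x
    have h2 : εp * ‖J x - (c-δ) • x‖ ≤ ‖J (J x - (c-δ) • x) - (c+δ) • (J x - (c-δ) • x)‖ :=
      hεp _
    rw [← hTfact] at h2
    nlinarith [norm_nonneg x, norm_nonneg (J x - (c-δ) • x)]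
  set Cop : ℝ := ‖J‖*‖J‖ + |2*c| * ‖J‖ + |c^2-δ^2| + 1 with hCopdef
  have hCop0 : 0 < Cop := by positivity
  have hCop : ∀ x : H, ‖T x‖ ≤ Cop * ‖x‖ := by
    intro x
    have h1 : ‖J (J x)‖ ≤ ‖J‖ * ‖J x‖ := J.le_opNorm _
    have h2 : ‖J x‖ ≤ ‖J‖ * ‖x‖ := J.le_opNorm _
    have h3 : ‖T x‖ ≤ ‖J (J x)‖ + ‖(2*c) • J x‖ + ‖(c^2-δ^2) • x‖ := by
      rw [hT]
      calc ‖J (J x) - (2*c) • J x + (c^2-δ^2) • x‖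
          ≤ ‖J (J x) - (2*c) • J x‖ + ‖(c^2-δ^2) • x‖ := norm_add_le _ _
        _ ≤ ‖J (J x)‖ + ‖(2*c) • J x‖ + ‖(c^2-δ^2) • x‖ := by
            have := norm_sub_le (J (J x)) ((2*c) • J x)
            linarith
    rw [norm_smul, norm_smul, Real.norm_eq_abs, Real.norm_eq_abs] at h3
    have hJ0 : (0:ℝ) ≤ ‖J‖ := norm_nonneg _
    have hx0 : (0:ℝ) ≤ ‖x‖ := norm_nonneg _
    have ha0 : (0:ℝ) ≤ |2*c| := abs_nonneg _
    have hb0 : (0:ℝ) ≤ |c^2-δ^2| := abs_nonneg _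
    rw [hCopdef]
    nlinarith [mul_le_mul_of_nonneg_left h2 hJ0, mul_le_mul_of_nonneg_left h2 ha0]
  -- the associated bilinear form and its positivity
  set Bf : H → H → ℝ := fun x y => ⟪J x - c • x, J y - c • y⟫ - δ^2 * ⟪x, y⟫ with hBf
  have hBT : ∀ x y : H, Bf x y = ⟪x, T y⟫ := by
    intro x y
    rw [hBf, hT]
    dsimp only
    simp only [inner_sub_left, inner_sub_right, inner_add_right,
      real_inner_smul_left, real_inner_smul_right]
    have h1 : ⟪J x, J y⟫ = ⟪x, J (J y)⟫ := hsym x (J y)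
    have h2 : ⟪J x, y⟫ = ⟪x, J y⟫ := hsym x y
    rw [h1, h2]
    ring
  have hBpos : ∀ x : H, 0 ≤ Bf x x := by
    intro x
    have h1 := hγlb x
    rw [hBf]
    dsimp only
    rw [real_inner_self_eq_norm_sq, real_inner_self_eq_norm_sq, hδsq]
    nlinarith [h1]
  have hinner4 : ∀ (a b : H) (t : ℝ),
      ⟪a + t • b, a + t • b⟫ = ⟪a,a⟫ + 2*t*⟪a,b⟫ + t^2*⟪b,b⟫ := by
    intro a b t
    rw [inner_add_left, inner_add_right, inner_add_right, real_inner_smul_left,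
      real_inner_smul_left, real_inner_smul_right, real_inner_smul_right, real_inner_comm b a]
    ring
  have hBadd : ∀ (x y : H) (t : ℝ),
      Bf (x + t • y) (x + t • y) = Bf x x + 2*t*(Bf x y) + t^2*(Bf y y) := by
    intro x y t
    rw [hBf]
    dsimp only
    have h1 : J (x + t • y) - c • (x + t • y) = (J x - c • x) + t • (J y - c • y) := by
      rw [map_add, ContinuousLinearMap.map_smul]
      module
    rw [h1, hinner4, hinner4]
    ring
  have hCS : ∀ x y : H, (Bf x y)^2 ≤ Bf x x * Bf y y := by
    intro x y
    have hq : ∀ t : ℝ, 0 ≤ (Bf y y) * (t*t) + (2*(Bf x y))*t + Bf x x := by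
      intro t
      have h := hBpos (x + t • y)
      rw [hBadd] at h
      nlinarith [h]
    have hdisc := discrim_le_zero hq
    rw [discrim] at hdisc
    nlinarith [hdisc]
  -- choose a near-minimizer and derive the contradiction
  have hC3 : (0:ℝ) < Cop^3 := pow_pos hCop0 3
  set X : ℝ := (εp*εm)^4 with hX
  have hX0 : 0 < X := by positivity
  set η : ℝ := X / (Cop^3 + 1) with hη
  have hη0 : 0 < η := by rw [hη]; positivity
  obtain ⟨r, hrmem, hrlt⟩ := exists_lt_of_csInf_lt hne (lt_add_of_pos_right γ hη0)
  obtain ⟨u, hu1a, rfl⟩ := hrmem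
  dsimp only at hrlt
  have hu1 : ‖u‖ = 1 := hu1a
  have hBuu : Bf u u = (‖J u - c • u‖^2 - d^2) - γ := by
    rw [hBf]
    dsimp only
    rw [real_inner_self_eq_norm_sq, real_inner_self_eq_norm_sq, hu1]
    nlinarith [hδsq]
  have hBuu_lt : Bf u u < η := by rw [hBuu]; linarith
  have hBuu_0 : 0 ≤ Bf u u := hBpos u
  have hTu_lb : εp*εm ≤ ‖T u‖ := by
    have h := hTlow u
    rwa [hu1, mul_one] at h
  have hTu_ub : ‖T u‖ ≤ Cop := by
    have h := hCop u
    rwa [hu1, mul_one] at h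
  have hTT : Bf (T u) u = ‖T u‖^2 := by
    rw [hBT (T u) u, real_inner_self_eq_norm_sq]
  have hBTT : Bf (T u) (T u) ≤ Cop^3 := by
    rw [hBT]
    calc ⟪T u, T (T u)⟫ ≤ ‖T u‖ * ‖T (T u)‖ := real_inner_le_norm _ _
      _ ≤ ‖T u‖ * (Cop * ‖T u‖) :=
          mul_le_mul_of_nonneg_left (hCop (T u)) (norm_nonneg _)
      _ ≤ Cop^3 := by
          nlinarith [mul_le_mul_of_nonneg_left
            (mul_le_mul hTu_ub hTu_ub (norm_nonneg (T u)) hCop0.le) hCop0.le]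
  have hCS' := hCS (T u) u
  rw [hTT] at hCS'
  have h4 : X ≤ Cop^3 * Bf u u := by
    have h1 : εp*εm ≤ ‖T u‖ := hTu_lb
    have h5 : (‖T u‖^2)^2 ≤ Cop^3 * Bf u u := by
      calc (‖T u‖^2)^2 ≤ Bf (T u) (T u) * Bf u u := hCS'
        _ ≤ Cop^3 * Bf u u := mul_le_mul_of_nonneg_right hBTT hBuu_0
    have h6 : X ≤ (‖T u‖^2)^2 := by
      have hpe : (0:ℝ) ≤ εp*εm := (mul_pos hεp0 hεm0).le
      have h7 := pow_le_pow_left₀ hpe h1 4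
      calc X = (εp*εm)^4 := hX
        _ ≤ ‖T u‖^4 := h7
        _ = (‖T u‖^2)^2 := by ring
    linarith
  have h5 : Bf u u * (Cop^3 + 1) < X := by
    rw [hη] at hBuu_lt
    exact (lt_div_iff₀ (by linarith)).1 hBuu_lt
  nlinarith [h4, h5, hBuu_0, hC3]

/-- Let `J` be a bounded self-adjoint Jacobi matrix (with respect to an
orthonormal basis `e` of a real Hilbert space, with off-diagonal entries `a k > 0` and
diagonal entries `b k`).  Assume the essential spectrum of `J` (characterized via singular
Weyl sequences) does not meet `(α, β)` and that `J` has no eigenvalues in `(α, β)`.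
Then for every `n`, both the compression of `J` to the span `S n` of the first `n` basis
vectors (the upper-left `n × n` corner `Pₙ J Pₙ`) and the compression of `J` to the
orthogonal complement of `S n` (the `n`-times stripped matrix `(1-Pₙ)J(1-Pₙ)`) have at
most one eigenvalue in `(α, β)`. -/
theorem stmt_1 {H : Type*} [NormedAddCommGroup H] [InnerProductSpace ℝ H] [CompleteSpace H]
    (e : ℕ → H) (hON : Orthonormal ℝ e)
    (htot : (span ℝ (Set.range e)).topologicalClosure = ⊤)
    (J : H →L[ℝ] H) (hsa : IsSelfAdjoint J)
    (a b : ℕ → ℝ) (ha : ∀ k, 0 < a k)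
    (hJ : ∀ k, J (e k) = a k • e (k + 1) + b k • e k +
      (if k = 0 then 0 else a (k - 1) • e (k - 1)))
    (α β : ℝ) (hab : α < β)
    -- `σ_ess(J) ∩ (α, β) = ∅` : no singular Weyl sequence for `μ ∈ (α, β)`
    (hess : ∀ μ ∈ Set.Ioo α β, ¬ ∃ u : ℕ → H, (∀ n, ‖u n‖ = 1) ∧
      (∀ v : H, Tendsto (fun n => ⟪u n, v⟫) atTop (nhds 0)) ∧
      Tendsto (fun n => ‖J (u n) - μ • u n‖) atTop (nhds 0))
    -- `J` has no eigenvalues in `(α, β)`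
    (heig : ∀ μ ∈ Set.Ioo α β, ¬ ∃ v : H, v ≠ 0 ∧ J v = μ • v)
    (n : ℕ) :
    -- at most one eigenvalue of `Pₙ J Pₙ` on `ran Pₙ` in `(α, β)` …
    Set.Subsingleton {μ ∈ Set.Ioo α β | ∃ v ∈ span ℝ (e '' Set.Iio n), v ≠ 0 ∧
        ∀ w ∈ span ℝ (e '' Set.Iio n), ⟪w, J v⟫ = μ * ⟪w, v⟫} ∧
    -- … and at most one eigenvalue of `(1-Pₙ) J (1-Pₙ)` on `ran (1-Pₙ)` in `(α, β)`
    Set.Subsingleton {μ ∈ Set.Ioo α β | ∃ v ∈ (span ℝ (e '' Set.Iio n))ᗮ, v ≠ 0 ∧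
        ∀ w ∈ (span ℝ (e '' Set.Iio n))ᗮ, ⟪w, J v⟫ = μ * ⟪w, v⟫} := by
  have hA : ∀ μ ∈ Set.Ioo α β, ∃ ε > 0, ∀ v : H, ε * ‖v‖ ≤ ‖J v - μ • v‖ :=
    fun μ hμ => gapA e hON htot J hsa μ (hess μ hμ) (heig μ hμ)
  have hgap := gapB J hsa α β hab hA
  have hsym : ∀ x y : H, ⟪J x, y⟫ = ⟪x, J y⟫ := by
    intro x y; have h := hsa.isSymmetric x y; simpa using h
  have hmemS : ∀ k, k < n → e k ∈ span ℝ (e '' Set.Iio n) :=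
    fun k hk => subset_span ⟨k, hk, rfl⟩
  have hinner_ee : ∀ i j : ℕ, ⟪e i, e j⟫ = if i = j then 1 else 0 := by
    intro i j
    by_cases h : i = j
    · subst h
      rw [if_pos rfl, real_inner_self_eq_norm_sq, hON.1 i, one_pow]
    · rw [if_neg h]
      exact hON.2 h
  constructor
  · -- corner Pₙ J Pₙ : couple through g = e n
    apply main_sub J hsa α β hab heig hgap (span ℝ (e '' Set.Iio n)) (e n)
    · -- orthogonality of e n to the span
      apply span_inner
      rintro x ⟨k, hk, rfl⟩
      simp only [Set.mem_Iio] at hk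
      rw [hinner_ee k n, if_neg (by omega)]
    · -- invariance up to the rank-one coupling
      intro v hv
      induction hv using Submodule.span_induction with
      | mem x hx =>
        obtain ⟨k, hk, rfl⟩ := hx
        simp only [Set.mem_Iio] at hk
        rw [hJ k]
        by_cases hkn : k + 1 = n
        · have h1 : ⟪e n, a k • e (k+1) + b k • e k
              + (if k = 0 then 0 else a (k-1) • e (k-1))⟫ = a k := by
            rw [inner_add_right, inner_add_right, real_inner_smul_right, real_inner_smul_right,
              hinner_ee n (k+1), hinner_ee n k]
            rw [if_pos hkn.symm, if_neg (by omega : ¬ n = k)]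
            by_cases hk0 : k = 0
            · rw [if_pos hk0, inner_zero_right]; ring
            · rw [if_neg hk0, real_inner_smul_right, hinner_ee n (k-1),
                if_neg (by omega : ¬ n = k-1)]
              ring
          rw [h1]
          have h2 : a k • e (k+1) + b k • e k + (if k = 0 then 0 else a (k-1) • e (k-1))
              - a k • e n = b k • e k + (if k = 0 then 0 else a (k-1) • e (k-1)) := by
            rw [hkn]
            abel
          rw [h2]
          refine Submodule.add_mem _ (Submodule.smul_mem _ _ (hmemS k hk)) ?_
          by_cases hk0 : k = 0
          · rw [if_pos hk0]; exact Submodule.zero_mem _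
          · rw [if_neg hk0]; exact Submodule.smul_mem _ _ (hmemS (k-1) (by omega))
        · have hk1 : k + 1 < n := by omega
          have h1 : ⟪e n, a k • e (k+1) + b k • e k
              + (if k = 0 then 0 else a (k-1) • e (k-1))⟫ = 0 := by
            rw [inner_add_right, inner_add_right, real_inner_smul_right, real_inner_smul_right,
              hinner_ee n (k+1), hinner_ee n k]
            rw [if_neg (by omega : ¬ n = k+1), if_neg (by omega : ¬ n = k)]
            by_cases hk0 : k = 0
            · rw [if_pos hk0, inner_zero_right]; ring
            · rw [if_neg hk0, real_inner_smul_right, hinner_ee n (k-1),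
                if_neg (by omega : ¬ n = k-1)]
              ring
          rw [h1, zero_smul, sub_zero]
          refine Submodule.add_mem _ (Submodule.add_mem _
            (Submodule.smul_mem _ _ (hmemS _ hk1)) (Submodule.smul_mem _ _ (hmemS _ hk))) ?_
          by_cases hk0 : k = 0
          · rw [if_pos hk0]; exact Submodule.zero_mem _
          · rw [if_neg hk0]; exact Submodule.smul_mem _ _ (hmemS (k-1) (by omega))
      | zero =>
        have : J (0:H) - ⟪e n, J (0:H)⟫ • e n = 0 := by
          rw [map_zero, inner_zero_right, zero_smul, sub_zero]
        rw [this]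
        exact Submodule.zero_mem _
      | add x y hx hy ihx ihy =>
        have h : J (x+y) - ⟪e n, J (x+y)⟫ • e n
            = (J x - ⟪e n, J x⟫ • e n) + (J y - ⟪e n, J y⟫ • e n) := by
          rw [map_add, inner_add_right]
          module
        rw [h]
        exact Submodule.add_mem _ ihx ihy
      | smul r x hx ih =>
        have h : J (r • x) - ⟪e n, J (r • x)⟫ • e n = r • (J x - ⟪e n, J x⟫ • e n) := by
          rw [ContinuousLinearMap.map_smul, real_inner_smul_right]
          module
        rw [h]
        exact Submodule.smul_mem _ _ ih
  · -- stripped (1-Pₙ) J (1-Pₙ) : couple through g = e (n-1)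
    apply main_sub J hsa α β hab heig hgap (span ℝ (e '' Set.Iio n))ᗮ
      (if n = 0 then 0 else e (n-1))
    · intro w hw
      by_cases hn : n = 0
      · rw [if_pos hn, inner_zero_right]
      · rw [if_neg hn]
        have hg : e (n-1) ∈ span ℝ (e '' Set.Iio n) := hmemS (n-1) (by omega)
        have h := (Submodule.mem_orthogonal _ w).1 hw (e (n-1)) hg
        rw [real_inner_comm]
        exact h
    · intro v hv
      have hv' : ∀ i, i < n → ⟪e i, v⟫ = 0 :=
        fun i hi => (Submodule.mem_orthogonal _ v).1 hv (e i) (hmemS i hi)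
      rw [Submodule.mem_orthogonal]
      intro u hu
      refine span_inner ?_ u hu
      rintro x ⟨j, hj, rfl⟩
      simp only [Set.mem_Iio] at hj
      have hjJ : ∀ i, i < n → ⟪e i, J v⟫ = if i = n-1 then a (n-1) * ⟪e n, v⟫ else 0 := by
        intro i hi
        have h0 : ⟪e i, J v⟫ = ⟪J (e i), v⟫ := (hsym (e i) v).symm
        have hlast : ⟪(if i = 0 then 0 else a (i-1) • e (i-1)), v⟫ = 0 := by
          by_cases hi0 : i = 0
          · rw [if_pos hi0, inner_zero_left]
          · rw [if_neg hi0, real_inner_smul_left, hv' (i-1) (by omega)]; ring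
        rw [h0, hJ i, inner_add_left, inner_add_left, real_inner_smul_left,
          real_inner_smul_left, hlast, hv' i hi]
        by_cases hi1 : i + 1 = n
        · obtain rfl : n = i + 1 := hi1.symm
          rw [if_pos (by omega : i = i + 1 - 1)]
          have : i + 1 - 1 = i := by omega
          rw [this]
          ring
        · rw [if_neg (by omega : ¬ i = n-1), hv' (i+1) (by omega)]
          ring
      rw [inner_sub_right, real_inner_smul_right]
      have hn : n ≠ 0 := by omega
      rw [if_neg hn]
      have hgJ : ⟪e (n-1), J v⟫ = a (n-1) * ⟪e n, v⟫ := by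
        rw [hjJ (n-1) (by omega), if_pos rfl]
      rw [hgJ, hjJ j hj, hinner_ee j (n-1)]
      by_cases hjn : j = n-1
      · rw [if_pos hjn, if_pos hjn]; ring
      · rw [if_neg hjn, if_neg hjn]; ring
end

section
/- Let J be a bounded self-adjoint operator on a Hilbert space with (J − c)² ≥ r² where c = (a+b)/2 and r = (b−a)/2, and let P be an orthogonal projection such that PJ(1−P)JP has rank one. Then (PJP − c)² ≥ P r² P − PJ(1−P)JP on ran(P); consequently PJP, restricted to ran(P), has at most one eigenvalue in (a,b). -/
set_option synthInstance.maxHeartbeats 1000000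
set_option maxHeartbeats 1000000


open Set
open scoped RealInnerProductSpace

/-- Let `J` be a bounded self-adjoint operator on a real Hilbert space with
`(J - c)² ≥ r²` where `c = (a+b)/2`, `r = (b-a)/2`, and let `P` be an orthogonal projection
such that `P J (1-P) J P` has rank one.  Then `(PJP - c)² ≥ r² P - P J (1-P) J P` on
`ran P`; consequently `PJP`, restricted to `ran P`, has at most one eigenvalue in `(a, b)`. -/
theorem stmt_2 {H : Type*} [NormedAddCommGroup H] [InnerProductSpace ℝ H] [CompleteSpace H]
    (J P : H →L[ℝ] H) (hJsa : IsSelfAdjoint J)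
    (hPidem : P ∘L P = P) (hPsa : IsSelfAdjoint P)
    (a b : ℝ) (hab : a < b)
    -- `(J - c)² ≥ r²` with `c = (a+b)/2`, `r = (b-a)/2`
    (hgap : ∀ v : H, ‖J v - ((a + b) / 2) • v‖ ^ 2 ≥ ((b - a) / 2) ^ 2 * ‖v‖ ^ 2)
    -- `P J (1-P) J P` has rank one
    (hrank : Module.finrank ℝ
      (LinearMap.range (P ∘L J ∘L (1 - P) ∘L J ∘L P : H →L[ℝ] H).toLinearMap) = 1) :
    -- `(PJP - c)² ≥ r² P - P J (1-P) J P` on `ran P`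
    (∀ v : H, P v = v →
      ‖P (J v) - ((a + b) / 2) • v‖ ^ 2 ≥
        ((b - a) / 2) ^ 2 * ‖v‖ ^ 2 - ‖J v - P (J v)‖ ^ 2) ∧
    -- `PJP` restricted to `ran P` has at most one eigenvalue in `(a, b)`
    Set.Subsingleton {μ ∈ Set.Ioo a b | ∃ v : H, P v = v ∧ v ≠ 0 ∧
      ∀ w : H, P w = w → ⟪w, J v⟫ = μ * ⟪w, v⟫} := by
  have hPP : ∀ x : H, P (P x) = P x := fun x => by
    have := ContinuousLinearMap.ext_iff.1 hPidem x
    simpa using this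
  have hP' : ∀ x y : H, ⟪P x, y⟫ = ⟪x, P y⟫ := fun x y => by
    conv_lhs => rw [← hPsa.adjoint_eq]
    exact ContinuousLinearMap.adjoint_inner_left P y x
  have hJ' : ∀ x y : H, ⟪J x, y⟫ = ⟪x, J y⟫ := fun x y => by
    conv_lhs => rw [← hJsa.adjoint_eq]
    exact ContinuousLinearMap.adjoint_inner_left J y x
  -- Part 1
  have part1 : ∀ v : H, P v = v →
      ‖P (J v) - ((a + b) / 2) • v‖ ^ 2 ≥
        ((b - a) / 2) ^ 2 * ‖v‖ ^ 2 - ‖J v - P (J v)‖ ^ 2 := by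
    intro v hv
    set x := P (J v) - ((a + b) / 2) • v with hxdef
    set y := J v - P (J v) with hydef
    have hxy : x + y = J v - ((a + b) / 2) • v := by rw [hxdef, hydef]; abel
    have hPy : P y = 0 := by
      rw [hydef, map_sub, hPP]; simp
    have hPx : P x = x := by
      rw [hxdef, map_sub, hPP, map_smul, hv]
    have hinner : ⟪x, y⟫ = 0 := by
      rw [← hPx, hP', hPy, inner_zero_right]
    have hsum : ‖x + y‖ ^ 2 = ‖x‖ ^ 2 + ‖y‖ ^ 2 := by
      rw [norm_add_sq_real, hinner]; ring
    have := hgap v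
    rw [← hxy, hsum] at this
    linarith
  refine ⟨part1, ?_⟩
  -- Part 2
  rintro μ₁ ⟨hμ₁, v₁, hPv₁, hv₁0, heig₁⟩ μ₂ ⟨hμ₂, v₂, hPv₂, hv₂0, heig₂⟩
  by_contra hne
  -- eigenvector equations: P (J vᵢ) = μᵢ • vᵢ
  have keyeig : ∀ (μ : ℝ) (v : H), P v = v →
      (∀ w : H, P w = w → ⟪w, J v⟫ = μ * ⟪w, v⟫) → P (J v) = μ • v := by
    intro μ v hv heig
    set z := P (J v) - μ • v with hz
    have hPz : P z = z := by rw [hz, map_sub, hPP, map_smul, hv]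
    have : ⟪z, z⟫ = 0 := by
      have h1 : ⟪z, P (J v)⟫ = ⟪z, J v⟫ := by rw [← hP', hPz]
      have h2 := heig z hPz
      rw [hz]
      simp only [inner_sub_right, inner_smul_right (𝕜 := ℝ)]
      rw [h1, h2]
      ring
    have : z = 0 := by rwa [inner_self_eq_zero] at this
    rw [hz, sub_eq_zero] at this
    exact this
  have he₁ : P (J v₁) = μ₁ • v₁ := keyeig μ₁ v₁ hPv₁ heig₁
  have he₂ : P (J v₂) = μ₂ • v₂ := keyeig μ₂ v₂ hPv₂ heig₂
  -- orthogonality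
  have horth : ⟪v₁, v₂⟫ = 0 := by
    have h1 : ⟪v₁, J v₂⟫ = μ₂ * ⟪v₁, v₂⟫ := heig₂ v₁ hPv₁
    have h2 : ⟪v₂, J v₁⟫ = μ₁ * ⟪v₂, v₁⟫ := heig₁ v₂ hPv₂
    have h3 : ⟪v₂, J v₁⟫ = ⟪v₁, J v₂⟫ := by rw [← hJ', real_inner_comm]
    have h4 : ⟪v₂, v₁⟫ = ⟪v₁, v₂⟫ := real_inner_comm _ _
    have h5 : μ₁ * ⟪v₁, v₂⟫ = μ₂ * ⟪v₁, v₂⟫ := by rw [← h4, ← h2, h3, h1, h4]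
    have : (μ₁ - μ₂) * ⟪v₁, v₂⟫ = 0 := by rw [sub_mul, h5, sub_self]
    rcases mul_eq_zero.1 this with h | h
    · exact absurd (sub_eq_zero.1 h) hne
    · exact h
  -- the rank-one operator
  set K : H →L[ℝ] H := P ∘L J ∘L (1 - P) ∘L J ∘L P with hK
  have hKapp : ∀ v : H, K v = P (J (J (P v) - P (J (P v)))) := fun v => by
    simp [hK, ContinuousLinearMap.comp_apply, ContinuousLinearMap.sub_apply, map_sub]
  -- find nonzero (s,t) with s • K v₁ + t • K v₂ = 0
  obtain ⟨u, -, hu⟩ := finrank_eq_one_iff'.1 hrank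
  have hmem : ∀ v : H, K v ∈ LinearMap.range (K : H →L[ℝ] H).toLinearMap :=
    fun v => ⟨v, rfl⟩
  obtain ⟨s, hs⟩ := hu ⟨K v₁, hmem v₁⟩
  obtain ⟨t, ht⟩ := hu ⟨K v₂, hmem v₂⟩
  have hs' : K v₁ = s • (u : H) := by
    have := congrArg (Subtype.val) hs; simpa using this.symm
  have ht' : K v₂ = t • (u : H) := by
    have := congrArg (Subtype.val) ht; simpa using this.symm
  obtain ⟨s', t', hst0, hlin⟩ : ∃ s' t' : ℝ, ¬(s' = 0 ∧ t' = 0) ∧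
      s' • K v₁ + t' • K v₂ = 0 := by
    by_cases h : s = 0
    · exact ⟨1, 0, by simp, by simp [hs', h]⟩
    · refine ⟨t, -s, fun ⟨_, h2⟩ => h (neg_eq_zero.1 h2), ?_⟩
      rw [hs', ht', smul_smul, smul_smul]
      module
  set w := s' • v₁ + t' • v₂ with hw
  have hPw : P w = w := by rw [hw, map_add, map_smul, map_smul, hPv₁, hPv₂]
  have hKw : K w = 0 := by rw [hw, map_add, map_smul, map_smul, hlin]
  -- ⟪w, K w⟫ = ‖J w - P (J w)‖ ^ 2
  have hform : ∀ v : H, P v = v → ⟪v, K v⟫ = ‖J v - P (J v)‖ ^ 2 := by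
    intro v hv
    have h1 : ⟪v, K v⟫ = ⟪J v, J v - P (J v)⟫ := by
      rw [hKapp, hv, ← hP', hv, hJ']
    have h2 : ⟪P (J v), J v - P (J v)⟫ = 0 := by
      rw [hP', map_sub, hPP, sub_self, inner_zero_right]
    rw [← real_inner_self_eq_norm_sq, inner_sub_left, h2, sub_zero, ← h1]
  have hwzero : ‖J w - P (J w)‖ ^ 2 = 0 := by
    rw [← hform w hPw, hKw, inner_zero_right]
  -- apply part 1 at w
  have hineq := part1 w hPw
  rw [hwzero, sub_zero] at hineq
  -- compute norms
  have hPJw : P (J w) = (s' * μ₁) • v₁ + (t' * μ₂) • v₂ := by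
    rw [hw]
    simp only [map_add, map_smul]
    rw [he₁, he₂, smul_smul, smul_smul]
  set c := (a + b) / 2 with hc
  set r := (b - a) / 2 with hr
  have hnorm2 : ∀ α β : ℝ, ‖α • v₁ + β • v₂‖ ^ 2 = α ^ 2 * ‖v₁‖ ^ 2 + β ^ 2 * ‖v₂‖ ^ 2 := by
    intro α β
    rw [norm_add_sq_real, real_inner_smul_left, real_inner_smul_right, horth,
      norm_smul, norm_smul, mul_pow, mul_pow]
    simp only [Real.norm_eq_abs, sq_abs]
    ring
  have hlhs : P (J w) - c • w = (s' * (μ₁ - c)) • v₁ + (t' * (μ₂ - c)) • v₂ := by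
    rw [hPJw, hw, smul_add, smul_smul, smul_smul]
    module
  rw [hlhs, hnorm2] at hineq
  have hwn : ‖w‖ ^ 2 = s' ^ 2 * ‖v₁‖ ^ 2 + t' ^ 2 * ‖v₂‖ ^ 2 := hnorm2 s' t'
  rw [hwn] at hineq
  have hμ₁r : (μ₁ - c) ^ 2 < r ^ 2 := by
    obtain ⟨h1, h2⟩ := hμ₁; rw [hc, hr]; nlinarith
  have hμ₂r : (μ₂ - c) ^ 2 < r ^ 2 := by
    obtain ⟨h1, h2⟩ := hμ₂; rw [hc, hr]; nlinarith
  have hv₁n : 0 < ‖v₁‖ ^ 2 := pow_pos (norm_pos_iff.mpr hv₁0) 2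
  have hv₂n : 0 < ‖v₂‖ ^ 2 := pow_pos (norm_pos_iff.mpr hv₂0) 2
  rcases not_and_or.1 hst0 with h | h
  · have hs2 : s' ^ 2 > 0 := by positivity
    nlinarith [mul_pos (mul_pos hs2 hv₁n) (sub_pos.2 hμ₁r),
      mul_nonneg (mul_nonneg (sq_nonneg t') hv₂n.le) (sub_pos.2 hμ₂r).le]
  · have ht2 : t' ^ 2 > 0 := by positivity
    nlinarith [mul_pos (mul_pos ht2 hv₂n) (sub_pos.2 hμ₂r),
      mul_nonneg (mul_nonneg (sq_nonneg s') hv₁n.le) (sub_pos.2 hμ₁r).le]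
end

section
/- Let E ⊂ ℝ be compact with cap(E) > 0, let g be the Green's function of Ω = (ℂ∪{∞})∖E with pole at ∞, and suppose x₁ < y₁ ≤ x₂ < y₂ ≤ … ≤ x_n < y_n are points in a single gap (α_j, β_j) of E (so g vanishes at α_j, β_j and is strictly concave on the gap with unique critical point c_j). If the intervals (x_k, y_k) interlace in the sense that each y_k lies between x_k and x_{k+1}, then Σ_k g(y_k) ≤ g(c_j) + Σ_k g(x_k). -/
open Set Finset

/-- On the left of the maximum point, a strictly concave function is monotone. -/
lemma aux_mono_left {αj βj : ℝ} {g : ℝ → ℝ}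
    (hconc : StrictConcaveOn ℝ (Set.Ioo αj βj) g)
    {cj : ℝ} (hcj : cj ∈ Set.Ioo αj βj) (hmax : IsMaxOn g (Set.Ioo αj βj) cj)
    {a b : ℝ} (ha : a ∈ Set.Ioo αj βj) (hb : b ∈ Set.Ioo αj βj)
    (hab : a ≤ b) (hbc : b ≤ cj) : g a ≤ g b := by
  rcases eq_or_lt_of_le hab with rfl | hab
  · exact le_refl _
  rcases eq_or_lt_of_le hbc with rfl | hbc
  · exact hmax ha
  have hca : 0 < cj - a := by linarith
  have ht : (0:ℝ) < (cj - b) / (cj - a) := div_pos (by linarith) hca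
  have hs : (0:ℝ) < (b - a) / (cj - a) := div_pos (by linarith) hca
  have hts : (cj - b) / (cj - a) + (b - a) / (cj - a) = 1 := by
    rw [← add_div, div_eq_one_iff_eq hca.ne'] ; ring
  have hcomb : ((cj - b) / (cj - a)) • a + ((b - a) / (cj - a)) • cj = b := by
    simp only [smul_eq_mul]
    field_simp
    ring
  have h1 := hconc.concaveOn.2 ha hcj ht.le hs.le hts
  rw [hcomb] at h1
  simp only [smul_eq_mul] at h1
  have h2 : g a ≤ g cj := hmax ha
  have h4 : ((b - a) / (cj - a)) * g a ≤ ((b - a) / (cj - a)) * g cj :=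
    mul_le_mul_of_nonneg_left h2 hs.le
  have h5 : ((cj - b) / (cj - a)) * g a + ((b - a) / (cj - a)) * g a = g a := by
    rw [← add_mul, hts, one_mul]
  linarith

/-- On the right of the maximum point, a strictly concave function is antitone. -/
lemma aux_anti_right {αj βj : ℝ} {g : ℝ → ℝ}
    (hconc : StrictConcaveOn ℝ (Set.Ioo αj βj) g)
    {cj : ℝ} (hcj : cj ∈ Set.Ioo αj βj) (hmax : IsMaxOn g (Set.Ioo αj βj) cj)
    {a b : ℝ} (ha : a ∈ Set.Ioo αj βj) (hb : b ∈ Set.Ioo αj βj)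
    (hca : cj ≤ a) (hab : a ≤ b) : g b ≤ g a := by
  rcases eq_or_lt_of_le hab with rfl | hab
  · exact le_refl _
  rcases eq_or_lt_of_le hca with rfl | hca
  · exact hmax hb
  have hbc : 0 < b - cj := by linarith
  have ht : (0:ℝ) < (b - a) / (b - cj) := div_pos (by linarith) hbc
  have hs : (0:ℝ) < (a - cj) / (b - cj) := div_pos (by linarith) hbc
  have hts : (b - a) / (b - cj) + (a - cj) / (b - cj) = 1 := by
    rw [← add_div, div_eq_one_iff_eq hbc.ne'] ; ring
  have hcomb : ((b - a) / (b - cj)) • cj + ((a - cj) / (b - cj)) • b = a := by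
    simp only [smul_eq_mul]
    field_simp
    ring
  have h1 := hconc.concaveOn.2 hcj hb ht.le hs.le hts
  rw [hcomb] at h1
  simp only [smul_eq_mul] at h1
  have h2 : g b ≤ g cj := hmax hb
  have h4 : ((b - a) / (b - cj)) * g b ≤ ((b - a) / (b - cj)) * g cj :=
    mul_le_mul_of_nonneg_left h2 ht.le
  have h5 : ((b - a) / (b - cj)) * g b + ((a - cj) / (b - cj)) * g b = g b := by
    rw [← add_mul, hts, one_mul]
  linarith

/-- Let `g` be the Green's function of the complement of a compact set
`E ⊆ ℝ`, restricted to a single gap `(αj, βj)` of `E`: `g` is nonnegative and strictly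
concave there, with unique maximum point `cj`.  If `x₁ < y₁ ≤ x₂ < y₂ ≤ … ≤ xₙ < yₙ`
are interlacing points in the gap, then `Σ g(yₖ) ≤ g(cj) + Σ g(xₖ)`. -/
theorem stmt_7 (αj βj : ℝ) (hlt : αj < βj) (g : ℝ → ℝ)
    (hg0 : ∀ t ∈ Set.Ioo αj βj, 0 ≤ g t)
    (hconc : StrictConcaveOn ℝ (Set.Ioo αj βj) g)
    (cj : ℝ) (hcj : cj ∈ Set.Ioo αj βj) (hmax : IsMaxOn g (Set.Ioo αj βj) cj)
    (n : ℕ) (x y : Fin n → ℝ)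
    (hxmem : ∀ k, x k ∈ Set.Ioo αj βj) (hymem : ∀ k, y k ∈ Set.Ioo αj βj)
    (hxy : ∀ k, x k < y k)
    (hinter : ∀ k : Fin n, ∀ h : (k : ℕ) + 1 < n, y k ≤ x ⟨(k : ℕ) + 1, h⟩) :
    ∑ k, g (y k) ≤ g cj + ∑ k, g (x k) := by
  induction n with
  | zero =>
      simpa using hg0 cj hcj
  | succ n ih =>
      have hxmono : StrictMono x := by
        apply Fin.strictMono_iff_lt_succ.mpr
        intro i
        have h1 : ((i.castSucc : Fin (n+1)) : ℕ) + 1 < n + 1 :=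
          Nat.succ_lt_succ i.isLt
        have h2 : y i.castSucc ≤ x i.succ := hinter i.castSucc h1
        exact lt_of_lt_of_le (hxy _) h2
      by_cases hc : x (Fin.last n) < cj
      · -- everything to the left of cj; telescope
        have h1 : ∀ i : Fin n, g (y i.castSucc) ≤ g (x i.succ) := by
          intro i
          have hle : y i.castSucc ≤ x i.succ :=
            hinter i.castSucc (Nat.succ_lt_succ i.isLt)
          have hxc : x i.succ ≤ cj :=
            le_of_lt (lt_of_le_of_lt (hxmono.monotone (Fin.le_last _)) hc)
          exact aux_mono_left hconc hcj hmax (hymem _) (hxmem _) hle hxc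
        have h2 : g (y (Fin.last n)) ≤ g cj := hmax (hymem _)
        have h3 : (0:ℝ) ≤ g (x 0) := hg0 _ (hxmem _)
        have h4 : ∑ i : Fin n, g (y i.castSucc) ≤ ∑ i : Fin n, g (x i.succ) :=
          Finset.sum_le_sum fun i _ => h1 i
        rw [Fin.sum_univ_castSucc (f := fun k => g (y k)),
            Fin.sum_univ_succ (f := fun k => g (x k))]
        linarith
      · -- the last interval is to the right of cj
        push_neg at hc
        have hlast : g (y (Fin.last n)) ≤ g (x (Fin.last n)) :=
          aux_anti_right hconc hcj hmax (hxmem _) (hymem _) hc (hxy _).le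
        have ihapp := ih (fun k => x k.castSucc) (fun k => y k.castSucc)
          (fun k => hxmem _) (fun k => hymem _) (fun k => hxy _)
          (by
            intro k h
            have h1 : ((k.castSucc : Fin (n+1)) : ℕ) + 1 < n + 1 := by
              simp only [Fin.coe_castSucc]
              omega
            exact hinter k.castSucc h1)
        rw [Fin.sum_univ_castSucc (f := fun k => g (y k)),
            Fin.sum_univ_castSucc (f := fun k => g (x k))]
        linarith
end
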